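/- arXiv:2206.01054 — 2 statements merged into one kernel-verified Lean document; each statement's English description precedes it below -/
import Mathlib

section
/- Let n ≥ 1 be an integer. If n is not the product of two distinct primes, then the automorphism group of the directed reduced power graph →RP(Z_n) of the cyclic group of order n is isomorphic to ∏_{d | n} S_{φ(d)}, the direct product over the positive divisors d of n of symmetric groups of degree φ(d) (φ Euler's totient function). If n = pq for distinct primes p and q, then Aut(→RP(Z_n)) is isomorphic to S_{φ(pq)} × S_{p+q-2}. -/
open Subgroup Set

variable (G : Type*) [Group G]

/-- Arc of the directed reduced power graph `→RP(G)`: from `x` to `y` iff `⟨y⟩ ⊊ ⟨x⟩`. -/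
def rpArc (x y : G) : Prop := zpowers y < zpowers x

/-- Adjacency in the undirected reduced power graph `RP(G)`:
`x` and `y` are adjacent iff `⟨x⟩ ⊊ ⟨y⟩` or `⟨y⟩ ⊊ ⟨x⟩`. -/
def rpAdj (x y : G) : Prop := zpowers x < zpowers y ∨ zpowers y < zpowers x

/-- `x ≃ y` iff `x` and `y` have the same neighbourhood in `RP(G)`. -/
def simEq (x y : G) : Prop := ∀ z : G, rpAdj G x z ↔ rpAdj G y z

/-- The `≃`-class `x̂` of `x`. -/
def hatCls (x : G) : Set G := {y | simEq G y x}

/-- The `∼`-class `[x]` of `x`: the set of generators of `⟨x⟩`. -/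
def genCls (x : G) : Set G := {y | zpowers y = zpowers x}

/-- The automorphism group of the directed reduced power graph `→RP(G)`,
as a subgroup of the permutations of `G`. -/
def DRPAut : Subgroup (Equiv.Perm G) where
  carrier := {π | ∀ x y : G, rpArc G (π x) (π y) ↔ rpArc G x y}
  one_mem' := fun _ _ => Iff.rfl
  mul_mem' := by
    intro a b ha hb x y
    simp only [Equiv.Perm.mul_apply]
    exact (ha (b x) (b y)).trans (hb x y)
  inv_mem' := by
    intro a ha x y
    have h := ha (a⁻¹ x) (a⁻¹ y)
    simp only [Equiv.Perm.coe_inv, Equiv.apply_symm_apply] at h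
    exact h.symm

/-- The automorphism group of the undirected reduced power graph `RP(G)`,
as a subgroup of the permutations of `G`. -/
def RPAut : Subgroup (Equiv.Perm G) where
  carrier := {π | ∀ x y : G, rpAdj G (π x) (π y) ↔ rpAdj G x y}
  one_mem' := fun _ _ => Iff.rfl
  mul_mem' := by
    intro a b ha hb x y
    simp only [Equiv.Perm.mul_apply]
    exact (ha (b x) (b y)).trans (hb x y)
  inv_mem' := by
    intro a ha x y
    have h := ha (a⁻¹ x) (a⁻¹ y)
    simp only [Equiv.Perm.coe_inv, Equiv.apply_symm_apply] at h
    exact h.symm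

/-- `⟨x⟩` is a maximal cyclic subgroup of `G`. -/
def IsMaxCyc (x : G) : Prop := ∀ y : G, zpowers x ≤ zpowers y → zpowers x = zpowers y

/-- The `≃`-class of `x` is of Type I: it is a single `∼`-class, `x̂ = [x]`. -/
def TypeI (x : G) : Prop := hatCls G x = genCls G x

/-- The `≃`-class of `x` is of Type II: it is a union of `r ≥ 2` `∼`-classes whose
cyclic subgroups are distinct maximal cyclic subgroups of `G`, all of the same order. -/
def TypeII (x : G) : Prop :=
  (∃ y z : G, simEq G y x ∧ simEq G z x ∧ zpowers y ≠ zpowers z) ∧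
  ∀ y : G, simEq G y x → IsMaxCyc G y ∧ orderOf y = orderOf x

/-- The `≃`-class of `x` is of Type III: `G` is non-cyclic, the class is a union of
`r ≥ 2` `∼`-classes whose cyclic subgroups are maximal cyclic subgroups of prime order,
and at least two distinct orders occur. -/
def TypeIII (x : G) : Prop :=
  ¬ IsCyclic G ∧
  (∃ y z : G, simEq G y x ∧ simEq G z x ∧ orderOf y ≠ orderOf z) ∧
  ∀ y : G, simEq G y x → IsMaxCyc G y ∧ (orderOf y).Prime

/-- The `≃`-class of `x` is of Type IV with parameter `(p, q)`: it is a union of exactly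
two `∼`-classes of elements of distinct prime orders `p` and `q`, the corresponding cyclic
subgroups being non-maximal when `G` is non-cyclic, and maximal when `G` is cyclic. -/
def TypeIV (x : G) (p q : ℕ) : Prop :=
  p.Prime ∧ q.Prime ∧ p ≠ q ∧
  (∃ x₁ x₂ : G, simEq G x₁ x ∧ simEq G x₂ x ∧ orderOf x₁ = p ∧ orderOf x₂ = q ∧
     ∀ y : G, simEq G y x → zpowers y = zpowers x₁ ∨ zpowers y = zpowers x₂) ∧
  ((¬ IsCyclic G ∧ ∀ y : G, simEq G y x → ¬ IsMaxCyc G y) ∨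
   (IsCyclic G ∧ ∀ y : G, simEq G y x → IsMaxCyc G y))

/-- A `P(G)`-permutation: a permutation `σ` of `G` preserving element orders, mapping each
`∼`-class `[x]` onto `[x^σ]`, and preserving inclusion and non-inclusion of cyclic subgroups. -/
def IsPPerm (σ : Equiv.Perm G) : Prop :=
  (∀ x : G, orderOf (σ x) = orderOf x) ∧
  (∀ x : G, σ '' genCls G x = genCls G (σ x)) ∧
  (∀ x y : G, zpowers y ≤ zpowers x ↔ zpowers (σ y) ≤ zpowers (σ x))

/-- A permutation of `G` fixing every `≃`-class setwise. -/
def FixesClasses (τ : Equiv.Perm G) : Prop := ∀ x : G, simEq G (τ x) x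

theorem Equiv.Perm.apply_inv_self {α : Type*} (f : Equiv.Perm α) (x : α) : f (f⁻¹ x) = x :=
  f.apply_symm_apply x

section AuxNT
open Nat Finset

lemma aux_le_div_minFac {m f : ℕ} (hf : f ∈ m.properDivisors) : f ≤ m / m.minFac := by
  obtain ⟨hfd, hflt⟩ := Nat.mem_properDivisors.mp hf
  have hm0 : m ≠ 0 := by omega
  have hdvd : m / f ∣ m := Nat.div_dvd_of_dvd hfd
  have hmf : m / f * f = m := Nat.div_mul_cancel hfd
  have h2 : 2 ≤ m / f := by
    rcases Nat.lt_or_ge (m / f) 2 with h | h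
    · exfalso
      rcases Nat.eq_zero_or_pos (m / f) with h' | h'
      · rw [h'] at hmf; simp at hmf; omega
      · have h1 : m / f = 1 := le_antisymm (Nat.lt_succ_iff.mp h) h'
        rw [h1] at hmf; simp at hmf; omega
    · exact h
  have hmin : m.minFac ≤ m / f := Nat.minFac_le_of_dvd h2 hdvd
  calc f = m / (m / f) := by rw [Nat.div_div_self hfd hm0]
    _ ≤ m / m.minFac := Nat.div_le_div_left hmin (Nat.minFac_pos m)

lemma eq_or_primes_of_properDivisors_eq {d e : ℕ} (hd : 0 < d) (he : 0 < e)
    (h : d.properDivisors = e.properDivisors) : d = e ∨ (d.Prime ∧ e.Prime) := by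
  by_cases hd1 : d = 1
  · subst hd1
    left
    by_contra he1
    have : 1 ∈ e.properDivisors := Nat.mem_properDivisors.mpr ⟨one_dvd e, by omega⟩
    rw [← h] at this
    simp at this
  by_cases he1 : e = 1
  · subst he1
    left
    exfalso
    have : 1 ∈ d.properDivisors := Nat.mem_properDivisors.mpr ⟨one_dvd d, by omega⟩
    rw [h] at this
    simp at this
  by_cases dP : d.Prime
  · by_cases eP : e.Prime
    · exact Or.inr ⟨dP, eP⟩
    · exfalso
      have h1 : d.properDivisors = {1} := Nat.properDivisors_eq_singleton_one_iff_prime.mpr dP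
      rw [h] at h1
      exact eP (Nat.properDivisors_eq_singleton_one_iff_prime.mp h1)
  by_cases eP : e.Prime
  · exfalso
    have h1 : e.properDivisors = {1} := Nat.properDivisors_eq_singleton_one_iff_prime.mpr eP
    rw [← h] at h1
    exact dP (Nat.properDivisors_eq_singleton_one_iff_prime.mp h1)
  -- both composite
  left
  have hdm : d.minFac ∈ d.properDivisors := by
    refine Nat.mem_properDivisors.mpr ⟨Nat.minFac_dvd d, lt_of_le_of_ne (Nat.minFac_le hd) ?_⟩
    intro hh
    exact dP (hh ▸ Nat.minFac_prime hd1)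
  have hem : e.minFac ∈ e.properDivisors := by
    refine Nat.mem_properDivisors.mpr ⟨Nat.minFac_dvd e, lt_of_le_of_ne (Nat.minFac_le he) ?_⟩
    intro hh
    exact eP (hh ▸ Nat.minFac_prime he1)
  have hc1 : e.minFac ≤ d.minFac :=
    Nat.minFac_le_of_dvd (Nat.minFac_prime hd1).two_le (Nat.mem_properDivisors.mp (h ▸ hdm)).1
  have hc2 : d.minFac ≤ e.minFac :=
    Nat.minFac_le_of_dvd (Nat.minFac_prime he1).two_le (Nat.mem_properDivisors.mp (h.symm ▸ hem)).1
  have hc : d.minFac = e.minFac := le_antisymm hc2 hc1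
  have hdM : d / d.minFac ∈ d.properDivisors := by
    refine Nat.mem_properDivisors.mpr ⟨Nat.div_dvd_of_dvd (Nat.minFac_dvd d), ?_⟩
    exact Nat.div_lt_self hd (Nat.minFac_prime hd1).one_lt
  have heM : e / e.minFac ∈ e.properDivisors := by
    refine Nat.mem_properDivisors.mpr ⟨Nat.div_dvd_of_dvd (Nat.minFac_dvd e), ?_⟩
    exact Nat.div_lt_self he (Nat.minFac_prime he1).one_lt
  have hM1 : d / d.minFac ≤ e / e.minFac := aux_le_div_minFac (h ▸ hdM)
  have hM2 : e / e.minFac ≤ d / d.minFac := aux_le_div_minFac (h.symm ▸ heM)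
  have hM : d / d.minFac = e / e.minFac := le_antisymm hM1 hM2
  calc d = d / d.minFac * d.minFac := (Nat.div_mul_cancel (Nat.minFac_dvd d)).symm
    _ = e / e.minFac * e.minFac := by rw [hM, hc]
    _ = e := Nat.div_mul_cancel (Nat.minFac_dvd e)

lemma eq_mul_of_propMults {n p q : ℕ} (hn : n ≠ 0) (hp : p.Prime) (hq : q.Prime) (hne : p ≠ q)
    (hpn : p ∣ n) (hqn : q ∣ n)
    (h : ∀ f, f ∣ n → ((p ∣ f ∧ f ≠ p) ↔ (q ∣ f ∧ f ≠ q))) : n = p * q := by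
  have hcop : Nat.Coprime p q := (Nat.coprime_primes hp hq).mpr hne
  have hpq : p * q ∣ n := Nat.Coprime.mul_dvd_of_dvd_of_dvd hcop hpn hqn
  obtain ⟨m, hm⟩ := hpq
  have hm0 : m ≠ 0 := by rintro rfl; simp at hm; omega
  by_cases hm1 : m = 1
  · rw [hm, hm1, mul_one]
  exfalso
  set r := m.minFac with hr
  have hrP : r.Prime := Nat.minFac_prime hm1
  have hrm : r ∣ m := Nat.minFac_dvd m
  by_cases hrp : r = p
  · have hf : p * p ∣ n := by
      rw [hm]
      obtain ⟨k, hk⟩ := hrm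
      rw [hk, hrp]
      ring_nf
      exact Dvd.intro (q * k) (by ring)
    have := (h (p * p) (dvd_trans (dvd_refl _) hf)).mp
      ⟨dvd_mul_right p p, by nlinarith [hp.two_le]⟩
    have hq2 : q ∣ p * p := this.1
    rcases (Nat.Prime.dvd_mul hq).mp hq2 with h' | h' <;>
      exact hne ((Nat.prime_dvd_prime_iff_eq hq hp).mp h').symm
  by_cases hrq : r = q
  · have hf : q * q ∣ n := by
      rw [hm]
      obtain ⟨k, hk⟩ := hrm
      rw [hk, hrq]
      exact Dvd.intro (p * k) (by ring)
    have := (h (q * q) hf).mpr ⟨dvd_mul_right q q, by nlinarith [hq.two_le]⟩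
    have hp2 : p ∣ q * q := this.1
    rcases (Nat.Prime.dvd_mul hp).mp hp2 with h' | h' <;>
      exact hne ((Nat.prime_dvd_prime_iff_eq hp hq).mp h')
  · have hf : p * r ∣ n := by
      rw [hm]
      obtain ⟨k, hk⟩ := hrm
      rw [hk]
      exact Dvd.intro (q * k) (by ring)
    have := (h (p * r) hf).mp ⟨dvd_mul_right p r, by nlinarith [hp.two_le, hrP.two_le]⟩
    have hq2 : q ∣ p * r := this.1
    rcases (Nat.Prime.dvd_mul hq).mp hq2 with h' | h'
    · exact hne ((Nat.prime_dvd_prime_iff_eq hq hp).mp h').symm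
    · exact hrq ((Nat.prime_dvd_prime_iff_eq hq hrP).mp h').symm

end AuxNT

section AuxPerm
open Equiv

def permCongrMulEquiv {α β : Type*} (e : α ≃ β) : Equiv.Perm α ≃* Equiv.Perm β :=
  { e.permCongr with
    map_mul' := fun f g => Equiv.ext fun x => by simp [Equiv.permCongr_apply] }

@[simp] lemma permCongrMulEquiv_apply {α β : Type*} (e : α ≃ β) (f : Equiv.Perm α) (x : β) :
    permCongrMulEquiv e f x = e (f (e.symm x)) := rfl

def permStab {α : Type*} {I : Type*} (c : α → I) : Subgroup (Equiv.Perm α) where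
  carrier := {π | ∀ x, c (π x) = c x}
  one_mem' := fun _ => rfl
  mul_mem' := by
    intro a b ha hb x
    simp only [Equiv.Perm.mul_apply]
    rw [ha (b x), hb x]
  inv_mem' := by
    intro a ha x
    conv_rhs => rw [← Equiv.Perm.apply_inv_self a x]
    rw [ha (a⁻¹ x)]

lemma mem_permStab {α I : Type*} {c : α → I} {π : Equiv.Perm α} :
    π ∈ permStab c ↔ ∀ x, c (π x) = c x := Iff.rfl

noncomputable section

variable {α I : Type*} (c : α → I)

def stabHomPre : ((i : I) → Equiv.Perm {x // c x = i}) →* Equiv.Perm α :=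
  (permCongrMulEquiv (Equiv.sigmaFiberEquiv c)).toMonoidHom.comp
    (Equiv.Perm.sigmaCongrRightHom (fun i => {x // c x = i}))

lemma stabHomPre_apply (f : (i : I) → Equiv.Perm {x // c x = i}) (x : α) :
    stabHomPre c f x = ↑(f (c x) ⟨x, rfl⟩) := rfl

lemma stabHomPre_mem (f : (i : I) → Equiv.Perm {x // c x = i}) :
    stabHomPre c f ∈ permStab c := by
  intro x
  rw [stabHomPre_apply]
  exact (f (c x) ⟨x, rfl⟩).2

def stabHom : ((i : I) → Equiv.Perm {x // c x = i}) →* permStab c :=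
  (stabHomPre c).codRestrict (permStab c) (stabHomPre_mem c)

lemma stabHom_bijective : Function.Bijective (stabHom c) := by
  constructor
  · intro f g hfg
    apply Equiv.Perm.sigmaCongrRightHom_injective (β := fun i => {x // c x = i})
    apply (permCongrMulEquiv (Equiv.sigmaFiberEquiv c)).injective
    have := congrArg (Subtype.val) hfg
    exact this
  · rintro ⟨π, hπ⟩
    refine ⟨fun i => π.subtypePerm (fun x => ?_), ?_⟩
    · constructor
      · intro hx; rw [← hx]; exact (hπ x).symm
      · intro hx; rw [← hx]; exact hπ x
    · apply Subtype.ext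
      apply Equiv.ext
      intro x
      rw [Subgroup.coe_mk]  -- maybe not needed
      exact rfl

def stabMulEquiv : (permStab c) ≃* ((i : I) → Equiv.Perm {x // c x = i}) :=
  (MulEquiv.ofBijective (stabHom c) (stabHom_bijective c)).symm

lemma stabMulEquiv_symm_apply_coe (f : (i : I) → Equiv.Perm {x // c x = i}) (x : α) :
    ((stabMulEquiv c).symm f : Equiv.Perm α) x = ↑(f (c x) ⟨x, rfl⟩) := rfl

end

def piFin3MulEquiv {M : Fin 3 → Type*} [∀ i, Group (M i)] [Subsingleton (M 2)] :
    ((i : Fin 3) → M i) ≃* (M 0 × M 1) where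
  toFun f := (f 0, f 1)
  invFun g := fun i => match i with
    | ⟨0, _⟩ => g.1
    | ⟨1, _⟩ => g.2
    | ⟨2, _⟩ => 1
  left_inv := by
    intro f
    funext i
    match i with
    | ⟨0, _⟩ => rfl
    | ⟨1, _⟩ => rfl
    | ⟨2, _⟩ => exact Subsingleton.elim (α := M 2) _ _
  right_inv := by intro g; rfl
  map_mul' := by intro f g; rfl

end AuxPerm

section CyclicFacts

variable {H : Type*} [Group H] [Fintype H] [IsCyclic H]

lemma mem_zpowers_of_orderOf_dvd {x y : H} (h : orderOf y ∣ orderOf x) : y ∈ zpowers x := by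
  classical
  have hdH : orderOf y ∣ Fintype.card (zpowers x) := by
    rw [Fintype.card_zpowers]; exact h
  have h1 : (Finset.univ.filter fun a : H => orderOf a = orderOf y).card = (orderOf y).totient :=
    IsCyclic.card_orderOf_eq_totient (h.trans orderOf_dvd_card)
  have h2 : (Finset.univ.filter fun a : (zpowers x) => orderOf a = orderOf y).card
      = (orderOf y).totient := IsCyclic.card_orderOf_eq_totient hdH
  set T := (Finset.univ.filter fun a : (zpowers x) => orderOf a = orderOf y).image
      Subtype.val with hT
  have hTcard : T.card = (orderOf y).totient := by
    rw [hT, Finset.card_image_of_injective _ Subtype.coe_injective, h2]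
  have hsub : T ⊆ Finset.univ.filter fun a : H => orderOf a = orderOf y := by
    intro z hz
    simp only [hT, Finset.mem_image, Finset.mem_filter, Finset.mem_univ, true_and] at hz ⊢
    obtain ⟨a, ha, rfl⟩ := hz
    rw [orderOf_coe]
    exact ha
  have hTeq : T = Finset.univ.filter fun a : H => orderOf a = orderOf y :=
    Finset.eq_of_subset_of_card_le hsub (by rw [h1, hTcard])
  have hy : y ∈ T := by
    rw [hTeq]; simp
  rw [hT] at hy
  simp only [Finset.mem_image, Finset.mem_filter, Finset.mem_univ, true_and] at hy
  obtain ⟨a, _, rfl⟩ := hy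
  exact a.2

lemma zpowers_le_iff {x y : H} : zpowers y ≤ zpowers x ↔ orderOf y ∣ orderOf x :=
  ⟨fun h => orderOf_dvd_of_mem_zpowers (h (mem_zpowers y)),
   fun h => (zpowers_le).mpr (mem_zpowers_of_orderOf_dvd h)⟩

lemma rpArc_iff {x y : H} : rpArc H x y ↔ orderOf y ∣ orderOf x ∧ orderOf y ≠ orderOf x := by
  rw [rpArc, lt_iff_le_not_ge, zpowers_le_iff, zpowers_le_iff]
  constructor
  · rintro ⟨h1, h2⟩
    exact ⟨h1, fun he => h2 (he ▸ dvd_refl _)⟩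
  · rintro ⟨h1, h2⟩
    exact ⟨h1, fun h3 => h2 (Nat.dvd_antisymm h1 h3)⟩

lemma exists_orderOf_eq' {d : ℕ} (hd : d ∣ Fintype.card H) : ∃ x : H, orderOf x = d := by
  obtain ⟨g, hg⟩ := IsCyclic.exists_ofOrder_eq_natCard (α := H)
  rw [Nat.card_eq_fintype_card] at hg
  have hcard0 : Fintype.card H ≠ 0 := Fintype.card_ne_zero
  refine ⟨g ^ (Fintype.card H / d), ?_⟩
  conv_lhs => rw [← hg]
  exact orderOf_pow_orderOf_div (by rw [hg]; exact hcard0) (by rw [hg]; exact hd)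

lemma csim_iff_orderOf_eq
    (hnpq : ¬ ∃ p q : ℕ, p.Prime ∧ q.Prime ∧ p ≠ q ∧ Fintype.card H = p * q) (u y : H) :
    (∀ z : H, (rpArc H u z ↔ rpArc H y z) ∧ (rpArc H z u ↔ rpArc H z y))
      ↔ orderOf y = orderOf u := by
  constructor
  · intro hsim
    have ha0 : 0 < orderOf u := orderOf_pos u
    have hb0 : 0 < orderOf y := orderOf_pos y
    have han : orderOf u ∣ Fintype.card H := orderOf_dvd_card
    have hbn : orderOf y ∣ Fintype.card H := orderOf_dvd_card
    have hPD : (orderOf u).properDivisors = (orderOf y).properDivisors := by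
      ext f
      simp only [Nat.mem_properDivisors]
      constructor
      · rintro ⟨hf1, hf2⟩
        obtain ⟨z, hz⟩ := exists_orderOf_eq' (hf1.trans han)
        have harc : rpArc H u z := rpArc_iff.mpr ⟨by rw [hz]; exact hf1, by rw [hz]; omega⟩
        have h2 := (hsim z).1.mp harc
        rw [rpArc_iff, hz] at h2
        exact ⟨h2.1, lt_of_le_of_ne (Nat.le_of_dvd hb0 h2.1) h2.2⟩
      · rintro ⟨hf1, hf2⟩
        obtain ⟨z, hz⟩ := exists_orderOf_eq' (hf1.trans hbn)
        have harc : rpArc H y z := rpArc_iff.mpr ⟨by rw [hz]; exact hf1, by rw [hz]; omega⟩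
        have h2 := (hsim z).1.mpr harc
        rw [rpArc_iff, hz] at h2
        exact ⟨h2.1, lt_of_le_of_ne (Nat.le_of_dvd ha0 h2.1) h2.2⟩
    have hPM : ∀ f, f ∣ Fintype.card H →
        ((orderOf u ∣ f ∧ f ≠ orderOf u) ↔ (orderOf y ∣ f ∧ f ≠ orderOf y)) := by
      intro f hf
      obtain ⟨z, hz⟩ := exists_orderOf_eq' hf
      constructor
      · rintro ⟨h1, h2⟩
        have harc : rpArc H z u := rpArc_iff.mpr
          ⟨by rw [hz]; exact h1, by rw [hz]; exact fun hh => h2 hh.symm⟩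
        have h3 := (hsim z).2.mp harc
        rw [rpArc_iff, hz] at h3
        exact ⟨h3.1, fun hh => h3.2 hh.symm⟩
      · rintro ⟨h1, h2⟩
        have harc : rpArc H z y := rpArc_iff.mpr
          ⟨by rw [hz]; exact h1, by rw [hz]; exact fun hh => h2 hh.symm⟩
        have h3 := (hsim z).2.mpr harc
        rw [rpArc_iff, hz] at h3
        exact ⟨h3.1, fun hh => h3.2 hh.symm⟩
    rcases eq_or_primes_of_properDivisors_eq ha0 hb0 hPD with h | ⟨hap, hbp⟩
    · exact h.symm
    · by_cases hab : orderOf u = orderOf y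
      · exact hab.symm
      · exact absurd ⟨orderOf u, orderOf y, hap, hbp, hab,
          eq_mul_of_propMults Fintype.card_ne_zero hap hbp hab han hbn hPM⟩ hnpq
  · intro h z
    constructor <;> rw [rpArc_iff, rpArc_iff, h]

lemma orderOf_map_eq
    (hnpq : ¬ ∃ p q : ℕ, p.Prime ∧ q.Prime ∧ p ≠ q ∧ Fintype.card H = p * q) :
    ∀ d : ℕ, ∀ π : Equiv.Perm H, (∀ x y : H, rpArc H (π x) (π y) ↔ rpArc H x y) →
      ∀ x : H, orderOf x = d → orderOf (π x) = d := by
  intro d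
  induction d using Nat.strong_induction_on with
  | _ d IH =>
  intro π hπ x hx
  classical
  set d' := orderOf (π x) with hd'
  have hd0 : 0 < d := hx ▸ orderOf_pos x
  have hd'0 : 0 < d' := orderOf_pos (π x)
  have hdn : d ∣ Fintype.card H := hx ▸ orderOf_dvd_card
  have hd'n : d' ∣ Fintype.card H := orderOf_dvd_card
  have hPD : d.properDivisors = d'.properDivisors := by
    ext f
    simp only [Nat.mem_properDivisors]
    constructor
    · rintro ⟨hf1, hf2⟩
      obtain ⟨z, hz⟩ := exists_orderOf_eq' (hf1.trans hdn)
      have harc : rpArc H x z := rpArc_iff.mpr ⟨by rw [hz, hx]; exact hf1, by rw [hz, hx]; omega⟩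
      have h2 := (hπ x z).mpr harc
      have h3 : orderOf (π z) = f := IH f hf2 π hπ z hz
      rw [rpArc_iff, h3] at h2
      exact ⟨h2.1, lt_of_le_of_ne (Nat.le_of_dvd hd'0 h2.1) h2.2⟩
    · rintro ⟨hf1, hf2⟩
      obtain ⟨w, hw⟩ := exists_orderOf_eq' (hf1.trans hd'n)
      have harc : rpArc H (π x) w := rpArc_iff.mpr ⟨by rw [hw]; exact hf1, by rw [hw]; omega⟩
      have h2 : rpArc H x (π⁻¹ w) := by
        have h4 := hπ x (π⁻¹ w)
        rw [Equiv.Perm.apply_inv_self] at h4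
        exact h4.mp harc
      rw [rpArc_iff, hx] at h2
      have he : orderOf (π⁻¹ w) < d := lt_of_le_of_ne (Nat.le_of_dvd hd0 h2.1) h2.2
      have h3 : orderOf (π (π⁻¹ w)) = orderOf (π⁻¹ w) := IH _ he π hπ _ rfl
      rw [Equiv.Perm.apply_inv_self, hw] at h3
      rw [h3]
      exact ⟨h2.1, he⟩
  rcases eq_or_primes_of_properDivisors_eq hd0 hd'0 hPD with h | ⟨hdp, hd'p⟩
  · exact h.symm
  by_cases hdd : d = d'
  · exact hdd.symm
  exfalso
  have hbij : (Finset.univ.filter fun y : H =>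
        ∀ z : H, (rpArc H x z ↔ rpArc H y z) ∧ (rpArc H z x ↔ rpArc H z y)).card
      = (Finset.univ.filter fun y : H =>
        ∀ z : H, (rpArc H (π x) z ↔ rpArc H y z) ∧ (rpArc H z (π x) ↔ rpArc H z y)).card := by
    apply Finset.card_bij (fun y _ => π y)
    · intro y hy
      simp only [Finset.mem_filter, Finset.mem_univ, true_and] at hy ⊢
      intro z
      constructor
      · rw [← Equiv.Perm.apply_inv_self π z, hπ, hπ]
        exact (hy (π⁻¹ z)).1
      · rw [← Equiv.Perm.apply_inv_self π z, hπ, hπ]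
        exact (hy (π⁻¹ z)).2
    · intro y1 _ y2 _ h
      exact π.injective h
    · intro w hw
      refine ⟨π⁻¹ w, ?_, Equiv.Perm.apply_inv_self π w⟩
      simp only [Finset.mem_filter, Finset.mem_univ, true_and] at hw ⊢
      intro z
      have e2 : ∀ v : H, (rpArc H (π⁻¹ w) v ↔ rpArc H w (π v)) := by
        intro v
        conv_rhs => rw [← Equiv.Perm.apply_inv_self π w]
        exact (hπ _ _).symm
      have e3 : ∀ v : H, (rpArc H v (π⁻¹ w) ↔ rpArc H (π v) w) := by
        intro v
        conv_rhs => rw [← Equiv.Perm.apply_inv_self π w]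
        exact (hπ _ _).symm
      constructor
      · calc rpArc H x z ↔ rpArc H (π x) (π z) := (hπ x z).symm
          _ ↔ rpArc H w (π z) := (hw (π z)).1
          _ ↔ rpArc H (π⁻¹ w) z := (e2 z).symm
      · calc rpArc H z x ↔ rpArc H (π z) (π x) := (hπ z x).symm
          _ ↔ rpArc H (π z) w := (hw (π z)).2
          _ ↔ rpArc H z (π⁻¹ w) := (e3 z).symm
  have hCx : (Finset.univ.filter fun y : H =>
      ∀ z : H, (rpArc H x z ↔ rpArc H y z) ∧ (rpArc H z x ↔ rpArc H z y)).card = d.totient := by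
    have heq : (Finset.univ.filter fun y : H =>
        ∀ z : H, (rpArc H x z ↔ rpArc H y z) ∧ (rpArc H z x ↔ rpArc H z y))
        = Finset.univ.filter fun y : H => orderOf y = d := by
      apply Finset.filter_congr
      intro y _
      rw [csim_iff_orderOf_eq hnpq x y, hx]
    rw [heq]
    exact IsCyclic.card_orderOf_eq_totient hdn
  have hCx' : (Finset.univ.filter fun y : H =>
      ∀ z : H, (rpArc H (π x) z ↔ rpArc H y z) ∧ (rpArc H z (π x) ↔ rpArc H z y)).card
        = d'.totient := by
    have heq : (Finset.univ.filter fun y : H =>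
        ∀ z : H, (rpArc H (π x) z ↔ rpArc H y z) ∧ (rpArc H z (π x) ↔ rpArc H z y))
        = Finset.univ.filter fun y : H => orderOf y = d' := by
      apply Finset.filter_congr
      intro y _
      rw [csim_iff_orderOf_eq hnpq (π x) y]
    rw [heq]
    exact IsCyclic.card_orderOf_eq_totient hd'n
  rw [hCx, hCx'] at hbij
  rw [Nat.totient_prime hdp, Nat.totient_prime hd'p] at hbij
  have h2d := hdp.two_le
  have h2d' := hd'p.two_le
  omega

end CyclicFacts

/-- for the cyclic group of order `n ≥ 1`:
if `n` is not a product of two distinct primes then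
`Aut(→RP(ℤ_n)) ≅ ∏_{d ∣ n} S_{φ(d)}`; and if `n = pq` with `p ≠ q` prime then
`Aut(→RP(ℤ_n)) ≅ S_{φ(pq)} × S_{p+q-2}`. -/
theorem aut_DRP_cyclic (n : ℕ) (hn : 1 ≤ n) {G : Type*} [Group G] [Fintype G]
    (hG : IsCyclic G) (hcard : Fintype.card G = n) :
    ((¬ ∃ p q : ℕ, p.Prime ∧ q.Prime ∧ p ≠ q ∧ n = p * q) →
      Nonempty (DRPAut G ≃*
        ((d : n.divisors) → Equiv.Perm (Fin (Nat.totient (d : ℕ)))))) ∧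
    (∀ p q : ℕ, p.Prime → q.Prime → p ≠ q → n = p * q →
      Nonempty (DRPAut G ≃*
        Equiv.Perm (Fin (Nat.totient (p * q))) × Equiv.Perm (Fin (p + q - 2)))) := by
  haveI := hG
  constructor
  · -- general case
    intro hnpq
    classical
    have hnpq' : ¬ ∃ p q : ℕ, p.Prime ∧ q.Prime ∧ p ≠ q ∧ Fintype.card G = p * q := by
      rw [hcard]; exact hnpq
    have hn0 : n ≠ 0 := by omega
    set c : G → {d : ℕ // d ∈ n.divisors} :=
      fun x => ⟨orderOf x, Nat.mem_divisors.mpr ⟨hcard ▸ orderOf_dvd_card, hn0⟩⟩ with hc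
    have hstab : DRPAut G = permStab c := by
      ext π
      constructor
      · intro hπ x
        apply Subtype.ext
        show orderOf (π x) = orderOf x
        exact orderOf_map_eq hnpq' (orderOf x) π hπ x rfl
      · intro hπ x y
        have hord : ∀ z, orderOf (π z) = orderOf z := fun z => congrArg Subtype.val (hπ z)
        rw [rpArc_iff, rpArc_iff, hord x, hord y]
    refine ⟨(MulEquiv.subgroupCongr hstab).trans ((stabMulEquiv c).trans
      (MulEquiv.piCongrRight fun i => permCongrMulEquiv (Fintype.equivFinOfCardEq ?_)))⟩
    have hi : (i : ℕ) ∣ Fintype.card G := hcard ▸ (Nat.mem_divisors.mp i.2).1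
    have hcongr : Fintype.card {x : G // c x = i}
        = Fintype.card {x : G // orderOf x = (i : ℕ)} := by
      apply Fintype.card_congr
      apply Equiv.subtypeEquivRight
      intro x
      constructor
      · intro h; exact congrArg Subtype.val h
      · intro h; exact Subtype.ext h
    rw [hcongr, Fintype.card_subtype]
    exact IsCyclic.card_orderOf_eq_totient hi
  · -- pq case
    intro p q hp hq hpq hnpq
    classical
    have hcard' : Fintype.card G = p * q := by rw [hcard, hnpq]
    have hp1 : p ≠ 1 := hp.ne_one
    have hq1 : q ≠ 1 := hq.ne_one
    have h2p := hp.two_le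
    have h2q := hq.two_le
    have hppq : p ≠ p * q := by nlinarith
    have hqpq : q ≠ p * q := by nlinarith
    have hpq1 : p * q ≠ 1 := by nlinarith
    have horder : ∀ x : G, orderOf x = 1 ∨ orderOf x = p ∨ orderOf x = q ∨ orderOf x = p * q := by
      intro x
      have hdvd : orderOf x ∣ p * q := hcard' ▸ orderOf_dvd_card
      by_cases hpd : p ∣ orderOf x
      · obtain ⟨k, hk⟩ := hpd
        rw [hk] at hdvd
        have hkq : k ∣ q := (mul_dvd_mul_iff_left (a := p) (by omega : p ≠ 0)).mp hdvd
        rcases (Nat.Prime.eq_one_or_self_of_dvd hq _ hkq) with h | h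
        · right; left; rw [hk, h, mul_one]
        · right; right; right; rw [hk, h]
      · have hcop : Nat.Coprime (orderOf x) p :=
          Nat.Coprime.symm ((Nat.Prime.coprime_iff_not_dvd hp).mpr hpd)
        have hdq : orderOf x ∣ q := hcop.dvd_of_dvd_mul_left hdvd
        rcases (Nat.Prime.eq_one_or_self_of_dvd hq _ hdq) with h | h
        · left; exact h
        · right; right; left; exact h
    set c : G → Fin 3 := fun x => if orderOf x = p * q then 0 else if x = 1 then 2 else 1
      with hcdef
    have hc0 : ∀ x : G, c x = 0 ↔ orderOf x = p * q := by
      intro x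
      rw [hcdef]
      by_cases h : orderOf x = p * q
      · simp [h]
      · simp only [h, if_false, iff_false]
        by_cases h1 : x = 1 <;> simp [h1]
    have hc2 : ∀ x : G, c x = 2 ↔ x = 1 := by
      intro x
      rw [hcdef]
      by_cases h1 : x = 1
      · simp [h1, Ne.symm hpq1]
      · by_cases h : orderOf x = p * q <;> simp [h, h1]
    have hc1 : ∀ x : G, c x = 1 ↔ (orderOf x = p ∨ orderOf x = q) := by
      intro x
      constructor
      · intro h
        have hnot0 : orderOf x ≠ p * q := by
          intro hh
          rw [(hc0 x).mpr hh] at h; exact absurd h (by decide)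
        have hnot2 : x ≠ 1 := by
          intro hh
          rw [(hc2 x).mpr hh] at h; exact absurd h (by decide)
        have hnot1 : orderOf x ≠ 1 := fun hh => hnot2 (orderOf_eq_one_iff.mp hh)
        rcases horder x with h' | h' | h' | h'
        · exact absurd h' hnot1
        · exact Or.inl h'
        · exact Or.inr h'
        · exact absurd h' hnot0
      · intro h
        have hnot0 : orderOf x ≠ p * q := by
          rcases h with h | h <;> rw [h] <;> assumption
        have hnot1 : x ≠ 1 := by
          intro hh
          rw [hh, orderOf_one] at h
          rcases h with h | h
          · exact hp1 h.symm
          · exact hq1 h.symm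
        rw [hcdef]
        simp [hnot0, hnot1]
    have harc : ∀ x y : G, rpArc G x y ↔ ((c x = 0 ∧ c y ≠ 0) ∨ (c x = 1 ∧ c y = 2)) := by
      intro x y
      rw [rpArc_iff]
      constructor
      · rintro ⟨h1, h2⟩
        rcases horder x with hx | hx | hx | hx
        · rw [hx] at h1 h2
          exact absurd (Nat.dvd_one.mp h1) h2
        · right
          have hy1 : orderOf y = 1 := by
            rcases hp.eq_one_or_self_of_dvd _ (hx ▸ h1) with h | h
            · exact h
            · exact absurd (h.trans hx.symm) h2
          exact ⟨(hc1 x).mpr (Or.inl hx), (hc2 y).mpr (orderOf_eq_one_iff.mp hy1)⟩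
        · right
          have hy1 : orderOf y = 1 := by
            rcases hq.eq_one_or_self_of_dvd _ (hx ▸ h1) with h | h
            · exact h
            · exact absurd (h.trans hx.symm) h2
          exact ⟨(hc1 x).mpr (Or.inr hx), (hc2 y).mpr (orderOf_eq_one_iff.mp hy1)⟩
        · left
          refine ⟨(hc0 x).mpr hx, fun hh => ?_⟩
          exact h2 (((hc0 y).mp hh).trans hx.symm)
      · rintro (⟨h1, h2⟩ | ⟨h1, h2⟩)
        · have hx := (hc0 x).mp h1
          have hy : orderOf y ≠ p * q := fun hh => h2 ((hc0 y).mpr hh)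
          refine ⟨?_, ?_⟩
          · rw [hx]; exact hcard' ▸ orderOf_dvd_card
          · rw [hx]; exact fun hh => hy hh
        · have hy := (hc2 y).mp h2
          have hx1 : x ≠ 1 := by
            intro hh
            rw [(hc2 x).mpr hh] at h1; exact absurd h1 (by decide)
          subst hy
          rw [orderOf_one]
          exact ⟨one_dvd _, fun hh => hx1 (orderOf_eq_one_iff.mp hh.symm)⟩
    -- intrinsic transports
    have hstab : DRPAut G = permStab c := by
      ext π
      constructor
      · intro hπ
        have hπ1 : ∀ u : G, π u = 1 ↔ u = 1 := by
          have hchar : ∀ u : G, u = 1 ↔ ∀ z : G, ¬ rpArc G u z := by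
            intro u
            constructor
            · rintro rfl z harc'
              rw [rpArc_iff, orderOf_one] at harc'
              exact harc'.2 (Nat.dvd_one.mp harc'.1)
            · intro h
              by_contra hu
              refine h 1 (rpArc_iff.mpr ?_)
              rw [orderOf_one]
              exact ⟨one_dvd _, fun hh => hu (orderOf_eq_one_iff.mp hh.symm)⟩
          intro u
          rw [hchar (π u), hchar u]
          constructor
          · intro h z
            have := h (π z)
            rw [hπ u z] at this
            exact this
          · intro h z
            rw [← Equiv.Perm.apply_inv_self π z, hπ]
            exact h _
        have hπ0 : ∀ u : G, orderOf (π u) = p * q ↔ orderOf u = p * q := by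
          have hchar : ∀ u : G, orderOf u = p * q ↔ ∃ z : G, z ≠ 1 ∧ rpArc G u z := by
            intro u
            constructor
            · intro h
              obtain ⟨z, hz⟩ := exists_orderOf_eq' (d := p) (H := G)
                (by rw [hcard']; exact ⟨q, rfl⟩)
              refine ⟨z, fun hh => hp1 (by rw [hh, orderOf_one] at hz; exact hz.symm), ?_⟩
              exact rpArc_iff.mpr ⟨by rw [hz, h]; exact ⟨q, rfl⟩,
                by rw [hz, h]; exact hppq⟩
            · rintro ⟨z, hz1, hzarc⟩
              rw [rpArc_iff] at hzarc
              obtain ⟨hd, hne⟩ := hzarc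
              have hz1' : orderOf z ≠ 1 := fun hh => hz1 (orderOf_eq_one_iff.mp hh)
              rcases horder u with h' | h' | h' | h'
              · rw [h'] at hd; exact absurd (Nat.dvd_one.mp hd) hz1'
              · rw [h'] at hd hne
                rcases hp.eq_one_or_self_of_dvd _ hd with h'' | h''
                · exact absurd h'' hz1'
                · exact absurd h'' hne
              · rw [h'] at hd hne
                rcases hq.eq_one_or_self_of_dvd _ hd with h'' | h''
                · exact absurd h'' hz1'
                · exact absurd h'' hne
              · exact h'
          intro u
          rw [hchar (π u), hchar u]
          constructor
          · rintro ⟨z, hz1, hzarc⟩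
            refine ⟨π⁻¹ z, ?_, ?_⟩
            · intro hh
              rw [← (hπ1 (π⁻¹ z)), Equiv.Perm.apply_inv_self] at hh
              exact hz1 hh
            · rw [← hπ u (π⁻¹ z), Equiv.Perm.apply_inv_self]
              exact hzarc
          · rintro ⟨z, hz1, hzarc⟩
            refine ⟨π z, fun hh => hz1 ((hπ1 z).mp hh), ?_⟩
            rw [hπ u z]
            exact hzarc
        intro x
        rw [hcdef]
        simp only
        by_cases h0 : orderOf x = p * q
        · rw [if_pos h0, if_pos ((hπ0 x).mpr h0)]
        · rw [if_neg h0, if_neg (fun hh => h0 ((hπ0 x).mp hh))]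
          by_cases h1 : x = 1
          · rw [if_pos h1, if_pos ((hπ1 x).mpr h1)]
          · rw [if_neg h1, if_neg (fun hh => h1 ((hπ1 x).mp hh))]
      · intro hπ x y
        rw [harc, harc, hπ x, hπ y]
    haveI hsub2 : Subsingleton {x : G // c x = 2} := by
      constructor
      rintro ⟨a, ha⟩ ⟨b, hb⟩
      apply Subtype.ext
      exact ((hc2 a).mp ha).trans ((hc2 b).mp hb).symm
    haveI hsubP : Subsingleton (Equiv.Perm {x : G // c x = 2}) :=
      ⟨fun f g => Equiv.ext fun z => Subsingleton.elim _ _⟩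
    have hcard0 : Fintype.card {x : G // c x = 0} = Nat.totient (p * q) := by
      have hcongr : Fintype.card {x : G // c x = 0}
          = Fintype.card {x : G // orderOf x = p * q} :=
        Fintype.card_congr (Equiv.subtypeEquivRight hc0)
      rw [hcongr, Fintype.card_subtype]
      exact IsCyclic.card_orderOf_eq_totient (by rw [hcard'])
    have hcard1 : Fintype.card {x : G // c x = 1} = p + q - 2 := by
      have hcongr : Fintype.card {x : G // c x = 1}
          = Fintype.card {x : G // orderOf x = p ∨ orderOf x = q} :=
        Fintype.card_congr (Equiv.subtypeEquivRight hc1)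
      rw [hcongr, Fintype.card_subtype]
      have hsplit : (Finset.univ.filter fun x : G => orderOf x = p ∨ orderOf x = q)
          = (Finset.univ.filter fun x : G => orderOf x = p)
            ∪ (Finset.univ.filter fun x : G => orderOf x = q) := by
        rw [← Finset.filter_or]
      rw [hsplit, Finset.card_union_of_disjoint]
      · have e1 : (Finset.univ.filter fun x : G => orderOf x = p).card = Nat.totient p :=
          IsCyclic.card_orderOf_eq_totient (by rw [hcard']; exact ⟨q, rfl⟩)
        have e2 : (Finset.univ.filter fun x : G => orderOf x = q).card = Nat.totient q :=
          IsCyclic.card_orderOf_eq_totient (by rw [hcard']; exact ⟨p, mul_comm p q⟩)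
        rw [e1, e2, Nat.totient_prime hp, Nat.totient_prime hq]
        omega
      · rw [Finset.disjoint_filter]
        intro x _ hxp hxq
        exact hpq (hxp.symm.trans hxq)
    refine ⟨(MulEquiv.subgroupCongr hstab).trans ((stabMulEquiv c).trans
      ((piFin3MulEquiv (M := fun i => Equiv.Perm {x : G // c x = i})).trans
        (MulEquiv.prodCongr (permCongrMulEquiv (Fintype.equivFinOfCardEq hcard0))
          (permCongrMulEquiv (Fintype.equivFinOfCardEq hcard1)))))⟩
end

section
/- Let p, q be distinct primes and let G be a finite group such that either (i) G is a p-group of exponent p with G not isomorphic to Z_2, or (ii) G is a non-nilpotent group of order p^m q in which every non-identity element has order p or q. Then Aut(→RP(G)) = Aut(RP(G)) and this group is isomorphic to the symmetric group of degree |G| - 1. -/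
open Subgroup Set

variable (G : Type*) [Group G]

/-- `Equiv.permCongr` as a `MulEquiv`. -/
def permMulCongr {α β : Type*} (e : α ≃ β) : Equiv.Perm α ≃* Equiv.Perm β :=
  { e.permCongr with
    map_mul' := fun p q => by
      ext x
      simp }

/-- A subgroup of `Equiv.Perm G` consisting exactly of permutations fixing `1` is
isomorphic to the permutations of the non-identity elements. -/
noncomputable def fixOneIso {G : Type*} [Group G] (H : Subgroup (Equiv.Perm G))
    (hH : ∀ π : Equiv.Perm G, π ∈ H ↔ π 1 = 1) :
    H ≃* Equiv.Perm {x : G // x ≠ 1} := by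
  classical
  refine
  { toFun := fun π => Equiv.Perm.subtypePerm (π : Equiv.Perm G) ?_
    invFun := fun σ =>
      ⟨σ.extendDomain (Equiv.refl {x : G // x ≠ 1}), (hH _).2
        (Equiv.Perm.extendDomain_apply_not_subtype (p := fun y : G => y ≠ 1) _ _ (not_not_intro rfl))⟩
    left_inv := ?_
    right_inv := ?_
    map_mul' := ?_ }
  · intro x
    have h1 : (π : Equiv.Perm G) 1 = 1 := (hH _).1 π.2
    constructor
    · intro hx hc
      exact hx (by subst hc; exact h1)
    · intro hx hc
      exact hx ((π : Equiv.Perm G).injective (hc.trans h1.symm))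
  · intro π
    have h1 : (π : Equiv.Perm G) 1 = 1 := (hH _).1 π.2
    apply Subtype.ext
    ext x
    dsimp only
    by_cases hx : x = 1
    · subst hx
      rw [Equiv.Perm.extendDomain_apply_not_subtype (p := fun y : G => y ≠ 1) _ _ (not_not_intro rfl), h1]
    · rw [Equiv.Perm.extendDomain_apply_subtype (p := fun y : G => y ≠ 1) _ _ hx]
      simp [Equiv.Perm.subtypePerm_apply]
  · intro σ
    ext x
    dsimp only
    rw [Equiv.Perm.subtypePerm_apply]
    simp only
    rw [Equiv.Perm.extendDomain_apply_subtype (p := fun y : G => y ≠ 1) _ _ x.2]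
    simp
  · intro π ρ
    ext x
    simp [Equiv.Perm.subtypePerm_apply]
    rfl

/-- if `G` is a `p`-group of exponent `p` not isomorphic to `ℤ₂`, or a
non-nilpotent group of order `p^m q` all of whose non-identity elements have order `p` or `q`
(`p ≠ q` primes), then `Aut(→RP(G)) = Aut(RP(G)) ≅ S_{|G| - 1}`. -/
theorem aut_RP_symmetric {G : Type*} [Group G] [Fintype G] (p q : ℕ)
    (hp : p.Prime) (hq : q.Prime) (hpq : p ≠ q)
    (hG : (IsPGroup p G ∧ (∀ g : G, g ≠ 1 → orderOf g = p) ∧ Fintype.card G ≠ 2) ∨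
          (¬ Group.IsNilpotent G ∧ (∃ m : ℕ, Fintype.card G = p ^ m * q) ∧
            ∀ g : G, g ≠ 1 → orderOf g = p ∨ orderOf g = q)) :
    DRPAut G = RPAut G ∧
    Nonempty (DRPAut G ≃* Equiv.Perm (Fin (Fintype.card G - 1))) := by
  classical
  have ord : ∀ g : G, g ≠ 1 → (orderOf g).Prime := by
    rcases hG with ⟨_, hord, _⟩ | ⟨_, _, hord⟩
    · intro g hg; rw [hord g hg]; exact hp
    · intro g hg; rcases hord g hg with h | h
      · rw [h]; exact hp
      · rw [h]; exact hq
  have key : ∀ a b : G, zpowers a < zpowers b → a = 1 := by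
    intro a b h
    by_contra ha
    have hb : b ≠ 1 := by
      rintro rfl
      rw [Subgroup.zpowers_one_eq_bot] at h
      exact (not_lt_bot h)
    have hmem : a ∈ zpowers b := h.le (Subgroup.mem_zpowers a)
    have hdvd : orderOf a ∣ orderOf b := orderOf_dvd_of_mem_zpowers hmem
    have heq : orderOf a = orderOf b :=
      (Nat.prime_dvd_prime_iff_eq (ord a ha) (ord b hb)).1 hdvd
    exact absurd (Subgroup.eq_of_le_of_card_ge h.le
      (by rw [Nat.card_zpowers, Nat.card_zpowers, heq])) h.ne
  have harc : ∀ a b : G, rpArc G a b ↔ (b = 1 ∧ a ≠ 1) := by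
    intro a b
    constructor
    · intro h
      have hb := key b a h
      subst hb
      refine ⟨rfl, ?_⟩
      rintro rfl
      exact h.ne rfl
    · rintro ⟨rfl, ha⟩
      show zpowers (1 : G) < zpowers a
      rw [Subgroup.zpowers_one_eq_bot]
      exact bot_lt_iff_ne_bot.2 (by simpa [Subgroup.zpowers_eq_bot] using ha)
  have hadj : ∀ a b : G, rpAdj G a b ↔ ((a = 1 ∧ b ≠ 1) ∨ (b = 1 ∧ a ≠ 1)) := by
    intro a b
    rw [show rpAdj G a b = (rpArc G b a ∨ rpArc G a b) from rfl, harc, harc]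
  have hcard2 : Fintype.card G ≠ 2 := by
    rcases hG with ⟨_, _, h2⟩ | ⟨hnil, _, _⟩
    · exact h2
    · intro h2
      haveI : Fact (Nat.Prime 2) := ⟨Nat.prime_two⟩
      haveI : Finite G := inferInstance
      have hpg : IsPGroup 2 G :=
        IsPGroup.of_card (n := 1) (by rw [Nat.card_eq_fintype_card, h2, pow_one])
      exact hnil hpg.isNilpotent
  have hπ1 : ∀ π : Equiv.Perm G, π ∈ DRPAut G ↔ π 1 = 1 := by
    intro π
    constructor
    · intro hπ
      by_cases h1 : ∀ g : G, g = 1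
      · exact h1 _
      · push_neg at h1
        obtain ⟨g, hg⟩ := h1
        have h2 : rpArc G (π g) (π 1) := (hπ g 1).2 ((harc g 1).2 ⟨rfl, hg⟩)
        exact ((harc _ _).1 h2).1
    · intro h1 x y
      have hiff : ∀ z : G, π z = 1 ↔ z = 1 := fun z =>
        ⟨fun hz => π.injective (hz.trans h1.symm), fun hz => hz ▸ h1⟩
      rw [harc, harc]
      simp only [ne_eq, hiff]
  have hcard : Fintype.card {x : G // x ≠ 1} = Fintype.card G - 1 := by
    simp [ne_eq, Fintype.card_subtype_compl, Fintype.card_subtype_eq]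
  have hρ1 : ∀ π : Equiv.Perm G, π ∈ RPAut G ↔ π 1 = 1 := by
    intro π
    constructor
    · intro hπ
      by_cases h1 : ∀ g : G, g = 1
      · exact h1 _
      · push_neg at h1
        obtain ⟨g, hg⟩ := h1
        -- card G ≥ 3
        have hge2 : 2 ≤ Fintype.card G := Fintype.one_lt_card_iff_nontrivial.2 ⟨⟨g, 1, hg⟩⟩
        have hge3 : 3 ≤ Fintype.card G := by omega
        have h2 : 1 < Fintype.card {x : G // x ≠ 1} := by omega
        obtain ⟨⟨g1, hg1⟩, ⟨g2, hg2⟩, hne⟩ := Fintype.exists_pair_of_one_lt_card h2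
        have hne' : g1 ≠ g2 := fun h => hne (Subtype.ext h)
        by_contra hπ1'
        have := fun g (hgg : g ≠ (1:G)) => (hadj _ _).1 ((hπ 1 g).2 ((hadj 1 g).2
          (Or.inl ⟨rfl, hgg⟩)))
        have e1 := this g1 hg1
        have e2 := this g2 hg2
        have f1 : π g1 = 1 := by
          rcases e1 with ⟨h, _⟩ | ⟨h, _⟩
          · exact absurd h hπ1'
          · exact h
        have f2 : π g2 = 1 := by
          rcases e2 with ⟨h, _⟩ | ⟨h, _⟩
          · exact absurd h hπ1'
          · exact h
        exact hne' (π.injective (f1.trans f2.symm))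
    · intro h1 x y
      have hiff : ∀ z : G, π z = 1 ↔ z = 1 := fun z =>
        ⟨fun hz => π.injective (hz.trans h1.symm), fun hz => hz ▸ h1⟩
      rw [hadj, hadj]
      simp only [ne_eq, hiff]
  have heqsub : DRPAut G = RPAut G := by
    ext π
    rw [hπ1, hρ1]
  refine ⟨heqsub, ⟨(fixOneIso (DRPAut G) hπ1).trans
    (permMulCongr (Fintype.equivFinOfCardEq hcard))⟩⟩
end
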